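/- arXiv:1105.1747 — 2 statements merged into one kernel-verified Lean document; each statement's English description precedes it below -/
import Mathlib

section
/- Let (α_k) be a nondecreasing sequence of positive reals tending to infinity and suppose limsup_k α_{k+1}/α_k > 1. Then there is no constant C > 0 such that the eigenvalue counting function N(x) = #{k : α_k ≤ x} satisfies N(x)/x^d → C for any d > 0. -/
open Set Filter

theorem stmt_3 (α : ℕ → ℝ) (hpos : ∀ k, 0 < α k) (hmono : Monotone α)
    (htop : Tendsto α atTop atTop)
    (hgaps : 1 < Filter.limsup (fun k => α (k + 1) / α k) atTop) :
    ∀ d : ℝ, 0 < d → ¬ ∃ C : ℝ, 0 < C ∧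
      Tendsto (fun x : ℝ => (({k : ℕ | α k ≤ x}.ncard : ℝ)) / x ^ d)
        atTop (nhds C) := by
  intro d hd h
  obtain ⟨C, hC, hlim⟩ := h
  set L := Filter.limsup (fun k => α (k + 1) / α k) atTop with hL
  set q : ℝ := (1 + L) / 2 with hqdef
  have hq1 : 1 < q := by simp only [hqdef]; linarith
  have hqL : q < L := by simp only [hqdef]; linarith
  have hq0 : 0 < q := by linarith
  have hcobdd : IsCoboundedUnder (· ≤ ·) atTop (fun k => α (k + 1) / α k) := by
    apply Filter.isCoboundedUnder_le_of_le atTop (x := 1)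
    intro k
    rw [le_div_iff₀ (hpos k)]
    have : α k ≤ α (k + 1) := hmono (Nat.le_succ k)
    linarith
  have hfreq : ∃ᶠ k in atTop, q < α (k + 1) / α k :=
    Filter.frequently_lt_of_lt_limsup hcobdd hqL
  obtain ⟨φ, hφmono, hφ⟩ := Filter.extraction_of_frequently_atTop hfreq
  -- key set equality
  have hset : ∀ n, {k : ℕ | α k ≤ q * α (φ n)} = {k : ℕ | α k ≤ α (φ n)} := by
    intro n
    have hgap : q * α (φ n) < α (φ n + 1) := by
      have := hφ n
      rw [lt_div_iff₀ (hpos (φ n))] at this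
      linarith
    ext k
    simp only [Set.mem_setOf_eq]
    constructor
    · intro hk
      by_contra hk'
      push_neg at hk'
      have hkge : φ n + 1 ≤ k := by
        by_contra hlt
        push_neg at hlt
        exact absurd (hmono (Nat.lt_succ_iff.mp hlt)) (not_le.mpr hk')
      have := hmono hkge
      linarith
    · intro hk
      have : α (φ n) ≤ q * α (φ n) := le_mul_of_one_le_left (hpos (φ n)).le hq1.le
      linarith
  have h1 : Tendsto (fun n => α (φ n)) atTop atTop :=
    htop.comp hφmono.tendsto_atTop
  have h2 : Tendsto (fun n => q * α (φ n)) atTop atTop :=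
    h1.const_mul_atTop hq0
  have hA : Tendsto (fun n => (({k : ℕ | α k ≤ α (φ n)}.ncard : ℝ)) / (α (φ n)) ^ d)
      atTop (nhds C) := hlim.comp h1
  have hB : Tendsto (fun n => (({k : ℕ | α k ≤ q * α (φ n)}.ncard : ℝ)) / (q * α (φ n)) ^ d)
      atTop (nhds C) := hlim.comp h2
  have hqd : (1 : ℝ) < q ^ d := (Real.one_lt_rpow_iff_of_pos hq0).mpr (Or.inl ⟨hq1, hd⟩)
  have hBeq : (fun n => (({k : ℕ | α k ≤ q * α (φ n)}.ncard : ℝ)) / (q * α (φ n)) ^ d)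
      = fun n => ((({k : ℕ | α k ≤ α (φ n)}.ncard : ℝ)) / (α (φ n)) ^ d) * (q ^ d)⁻¹ := by
    funext n
    rw [hset n, Real.mul_rpow hq0.le (hpos (φ n)).le]
    field_simp
  rw [hBeq] at hB
  have hB' : Tendsto (fun n => ((({k : ℕ | α k ≤ α (φ n)}.ncard : ℝ)) / (α (φ n)) ^ d) * (q ^ d)⁻¹)
      atTop (nhds (C * (q ^ d)⁻¹)) := hA.mul_const _
  have heq : C = C * (q ^ d)⁻¹ := tendsto_nhds_unique hB hB'
  have hlt : C * (q ^ d)⁻¹ < C :=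
    mul_lt_of_lt_one_right hC (inv_lt_one_of_one_lt₀ hqd)
  linarith
end

section
/- Let R: ℝ → ℝ be a polynomial of degree d ≥ 2 with R(0) = 0 and real coefficients, and suppose [0,a] is forward invariant in the sense that R([0,a]) ⊇ [0,a] via d monotone branches, and b is the smallest positive number such that R⁻¹([0,b]) ∩ [0,∞) ⊆ [0,b]. If b is finite, then either R(b) = 0 or R(b) = b. -/
open Set Polynomial

theorem stmt_15 (p : ℝ[X]) (hdeg : 2 ≤ p.natDegree) (h0 : p.eval 0 = 0)
    (a : ℝ) (ha : 0 < a)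
    (hfwd : Icc (0:ℝ) a ⊆ (fun x => p.eval x) '' Icc 0 a)
    (b : ℝ) (hb : 0 < b)
    (hinv : (fun x => p.eval x) ⁻¹' Icc 0 b ∩ Ici 0 ⊆ Icc 0 b)
    (hmin : ∀ b' : ℝ, 0 < b' →
      (fun x => p.eval x) ⁻¹' Icc 0 b' ∩ Ici 0 ⊆ Icc 0 b' → b ≤ b') :
    p.eval b = 0 ∨ p.eval b = b := by
  set f : ℝ → ℝ := fun x => p.eval x with hf
  have hcont : Continuous f := p.continuous
  set K : Set ℝ := f ⁻¹' Icc (0:ℝ) b ∩ Ici 0 with hK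
  have hKsub : K ⊆ Icc 0 b := hinv
  have h0K : (0:ℝ) ∈ K := ⟨⟨by simp [hf, h0], by simp [hf, h0, hb.le]⟩, self_mem_Ici⟩
  have hKclosed : IsClosed K := (isClosed_Icc.preimage hcont).inter isClosed_Ici
  have hbdd : BddAbove K := ⟨b, fun x hx => (hKsub hx).2⟩
  have hm : sSup K ∈ K := hKclosed.csSup_mem ⟨0, h0K⟩ hbdd
  have hbK : b ∈ K := by
    by_contra hb'
    have hmlt : sSup K < b := lt_of_le_of_ne (hKsub hm).2 (fun h => hb' (h ▸ hm))
    have hm0 : 0 ≤ sSup K := (hKsub hm).1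
    set c := (sSup K + b) / 2 with hc
    have hc0 : 0 < c := by positivity
    have hcb : c < b := by simp only [hc]; linarith
    have hsc : sSup K < c := by simp only [hc]; linarith
    have hP : f ⁻¹' Icc 0 c ∩ Ici 0 ⊆ Icc 0 c := by
      intro x hx
      have hxK : x ∈ K := ⟨⟨hx.1.1, hx.1.2.trans hcb.le⟩, hx.2⟩
      exact ⟨hx.2, (le_csSup hbdd hxK).trans hsc.le⟩
    exact absurd (hmin c hc0 hP) (not_le.2 hcb)
  have hfb : f b ∈ Icc (0:ℝ) b := hbK.1
  rcases eq_or_lt_of_le hfb.1 with h1 | h1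
  · exact Or.inl h1.symm
  rcases eq_or_lt_of_le hfb.2 with h2 | h2
  · exact Or.inr h2
  exfalso
  have hev : ∀ᶠ x in nhds b, f x ∈ Ioo (0:ℝ) b :=
    hcont.continuousAt.eventually_mem (isOpen_Ioo.mem_nhds ⟨h1, h2⟩)
  have hev' : ∀ᶠ x in nhdsWithin b (Ioi b), f x ∈ Ioo (0:ℝ) b ∧ x ∈ Ioi b :=
    (hev.filter_mono nhdsWithin_le_nhds).and self_mem_nhdsWithin
  obtain ⟨x, hx1, hx2⟩ := hev'.exists
  have : x ∈ Icc (0:ℝ) b :=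
    hinv ⟨⟨hx1.1.le, hx1.2.le⟩, le_of_lt (hb.trans hx2)⟩
  exact absurd this.2 (not_le.2 hx2)
end
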